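/- arXiv:1605.08725 — 2 statements merged into one kernel-verified Lean document; each statement's English description precedes it below -/
import Mathlib

section
/- For every formal power series z ∈ 1 + t·ℚ[[t]] there exist unique rational numbers (q_n)_{n≥1} such that z = ∏_{n≥1} (1 - t^n)^{q_n}, where (1-t^n)^{q} is defined as exp(q·log(1-t^n)). Equivalently, the series (log(1-t^n))_{n≥1} form a basis of the ℚ-module t·ℚ[[t]]. -/
/-- Formal exponential `exp x = ∑_{k ≥ 0} x^k / k!` of a power series `x`
(with zero constant term), defined coefficientwise. -/
noncomputable def expS (x : PowerSeries ℚ) : PowerSeries ℚ :=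
  PowerSeries.mk fun n =>
    ∑ k ∈ Finset.range (n + 1), PowerSeries.coeff n (x ^ k) / (Nat.factorial k : ℚ)

/-- Formal logarithm `log z = -∑_{k ≥ 1} (1-z)^k / k` of a power series `z`
(with constant term 1), defined coefficientwise. -/
noncomputable def logS (z : PowerSeries ℚ) : PowerSeries ℚ :=
  PowerSeries.mk fun n =>
    ∑ k ∈ Finset.range (n + 1), (-1) ^ (k + 1) / (k : ℚ) * PowerSeries.coeff n ((z - 1) ^ k)

/-- Rational power `(w)^q := exp (q • log w)` for `w ∈ 1 + t·ℚ[[t]]`. -/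
noncomputable def rpowS (q : ℚ) (w : PowerSeries ℚ) : PowerSeries ℚ :=
  expS (q • logS w)

open PowerSeries Finset

lemma coeff_neg_X_pow (N k i : ℕ) :
    coeff i ((-(X ^ N : PowerSeries ℚ)) ^ k) =
      (-1) ^ k * (if i = N * k then 1 else 0) := by
  rw [← neg_one_smul ℚ (X ^ N : PowerSeries ℚ), smul_pow, ← pow_mul, map_smul,
    smul_eq_mul, PowerSeries.coeff_X_pow]

lemma sub_sub_one (m : ℕ) : ((1 : PowerSeries ℚ) - X ^ m - 1) = -(X ^ m) := by ring

lemma coeff_logS_lt {m i : ℕ} (hi : i < m) :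
    coeff i (logS (1 - X ^ m)) = 0 := by
  simp only [logS, coeff_mk]
  apply Finset.sum_eq_zero
  intro k hk
  rcases Nat.eq_zero_or_pos k with h | h
  · subst h; norm_num
  · have hne : ¬ i = m * k := by nlinarith [Finset.mem_range.mp hk]
    rw [sub_sub_one, coeff_neg_X_pow, if_neg hne]
    ring

lemma coeff_logS_self {m : ℕ} (hm : 1 ≤ m) :
    coeff m (logS (1 - X ^ m)) = -1 := by
  simp only [logS, coeff_mk, sub_sub_one, coeff_neg_X_pow]
  rw [Finset.sum_eq_single 1]
  · norm_num
  · intro k hk hk1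
    have hne : ¬ m = m * k := by
      rcases Nat.eq_zero_or_pos k with h | h
      · subst h; omega
      · have h2 : 2 ≤ k := by omega
        nlinarith
    rw [if_neg hne]
    ring
  · intro h
    exact absurd (Finset.mem_range.mpr (by omega)) h

lemma constantCoeff_expS (x : PowerSeries ℚ) :
    constantCoeff (expS x) = 1 := by
  rw [← PowerSeries.coeff_zero_eq_constantCoeff_apply]
  simp [expS]

lemma coeff_pow_eq_zero {x : PowerSeries ℚ} {m : ℕ} (hx : ∀ j < m, coeff j x = 0)
    {k i : ℕ} (hi : i < m * k) : coeff i (x ^ k) = 0 := by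
  have hd : X ^ m ∣ x := PowerSeries.X_pow_dvd_iff.mpr hx
  have hd2 : X ^ (m * k) ∣ x ^ k := by
    rw [pow_mul]
    exact pow_dvd_pow_of_dvd hd k
  exact PowerSeries.X_pow_dvd_iff.mp hd2 i hi

lemma coeff_expS_lt {x : PowerSeries ℚ} {m i : ℕ} (hx : ∀ j < m, coeff j x = 0)
    (h0 : 0 < i) (him : i < m) : coeff i (expS x) = 0 := by
  simp only [expS, coeff_mk]
  apply Finset.sum_eq_zero
  intro k hk
  rcases Nat.eq_zero_or_pos k with hk0 | hk0
  · simp [hk0, PowerSeries.coeff_one, Nat.pos_iff_ne_zero.mp h0]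
  · rw [coeff_pow_eq_zero hx (by nlinarith)]
    simp

lemma coeff_expS_self {x : PowerSeries ℚ} {m : ℕ} (hm : 1 ≤ m)
    (hx : ∀ j < m, coeff j x = 0) : coeff m (expS x) = coeff m x := by
  simp only [expS, coeff_mk]
  rw [Finset.sum_eq_single 1]
  · simp
  · intro k hk hk1
    rcases Nat.eq_zero_or_pos k with hk0 | hk0
    · simp [hk0, PowerSeries.coeff_one, Nat.pos_iff_ne_zero.mp hm]
    · have hk2 : 2 ≤ k := by omega
      rw [coeff_pow_eq_zero hx (by nlinarith)]
      simp
  · intro h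
    exact absurd (Finset.mem_range.mpr (by omega)) h

lemma rpowS_coeff_lt {q : ℚ} {m i : ℕ} (h0 : 0 < i) (him : i < m) :
    coeff i (rpowS q (1 - X ^ m)) = 0 := by
  apply coeff_expS_lt _ h0 him
  intro j hj
  rw [map_smul, coeff_logS_lt hj, smul_zero]

lemma rpowS_coeff_self {q : ℚ} {m : ℕ} (hm : 1 ≤ m) :
    coeff m (rpowS q (1 - X ^ m)) = -q := by
  rw [rpowS, coeff_expS_self hm]
  · rw [map_smul, coeff_logS_self hm]
    simp
  · intro j hj
    rw [map_smul, coeff_logS_lt hj, smul_zero]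

lemma constantCoeff_rpowS (q : ℚ) (w : PowerSeries ℚ) :
    constantCoeff (rpowS q w) = 1 := constantCoeff_expS _

lemma key_mul {q : ℚ} {m : ℕ} (hm : 1 ≤ m) (P : PowerSeries ℚ) :
    coeff m (rpowS q (1 - X ^ m) * P) =
      coeff m P - q * constantCoeff P := by
  rw [PowerSeries.coeff_mul, Finset.Nat.sum_antidiagonal_eq_sum_range_succ_mk]
  rw [Finset.sum_eq_add_of_mem 0 m (Finset.mem_range.mpr (by omega))
      (Finset.mem_range.mpr (by omega)) (by omega)]
  · have h0 : coeff 0 (rpowS q (1 - X ^ m)) = 1 := by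
      rw [PowerSeries.coeff_zero_eq_constantCoeff_apply, constantCoeff_rpowS]
    rw [h0, rpowS_coeff_self hm]
    simp only [Nat.sub_zero, Nat.sub_self, one_mul, PowerSeries.coeff_zero_eq_constantCoeff]
    ring
  · intro c hc hcc
    rw [rpowS_coeff_lt (by omega) (by simp at hc; omega), zero_mul]

lemma constantCoeff_prod_rpowS (q : ℕ → ℚ) (s : Finset ℕ) :
    constantCoeff (∏ n ∈ s, rpowS (q n) (1 - X ^ n)) = 1 := by
  rw [map_prod]
  exact Finset.prod_eq_one fun _ _ => constantCoeff_rpowS _ _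

lemma coeff_prod_rpowS_top {q : ℕ → ℚ} {m : ℕ} :
    coeff (m + 1) (∏ n ∈ Finset.Icc 1 (m + 1), rpowS (q n) (1 - X ^ n)) =
      coeff (m + 1) (∏ n ∈ Finset.Icc 1 m, rpowS (q n) (1 - X ^ n)) - q (m + 1) := by
  rw [Finset.prod_Icc_succ_top (by omega), mul_comm, key_mul (by omega),
    constantCoeff_prod_rpowS]
  ring

noncomputable def qf (z : PowerSeries ℚ) : ℕ → ℚ
  | 0 => 0
  | (m + 1) =>
    PowerSeries.coeff (m + 1) (∏ n ∈ (Finset.Icc 1 m).attach,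
        rpowS (qf z n.1) (1 - PowerSeries.X ^ (n.1 : ℕ))) - PowerSeries.coeff (m + 1) z
  decreasing_by exact Nat.lt_succ_of_le (Finset.mem_Icc.mp n.2).2

lemma qf_succ (z : PowerSeries ℚ) (m : ℕ) :
    qf z (m + 1) = PowerSeries.coeff (m + 1)
      (∏ n ∈ Finset.Icc 1 m, rpowS (qf z n) (1 - X ^ n)) -
      PowerSeries.coeff (m + 1) z := by
  rw [qf, Finset.prod_attach (Finset.Icc 1 m) (fun n => rpowS (qf z n) (1 - X ^ n))]

/-- Every `z ∈ 1 + t·ℚ[[t]]` factors uniquely as `∏_{n ≥ 1} (1 - tⁿ)^{q n}` with `q n ∈ ℚ`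
(the infinite product is understood coefficientwise: the coefficient of `t^m` only
depends on the factors with `n ≤ m`). -/
theorem stmt_2 (z : PowerSeries ℚ) (hz : PowerSeries.constantCoeff z = 1) :
    ∃! q : ℕ → ℚ, q 0 = 0 ∧ ∀ m : ℕ,
      PowerSeries.coeff m z =
        PowerSeries.coeff m
          (∏ n ∈ Finset.Icc 1 m, rpowS (q n) (1 - PowerSeries.X ^ n)) := by
  refine ⟨qf z, ⟨by rw [qf], ?_⟩, ?_⟩
  · intro m
    cases m with
    | zero => simpa using hz
    | succ m =>
        rw [coeff_prod_rpowS_top, qf_succ]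
        ring
  · intro q' ⟨hq0, hq⟩
    funext m
    induction m using Nat.strong_induction_on with
    | _ m ih =>
      cases m with
      | zero => rw [hq0, qf]
      | succ m =>
          have h1 := hq (m + 1)
          rw [coeff_prod_rpowS_top] at h1
          have h2 : (∏ n ∈ Finset.Icc 1 m, rpowS (q' n) (1 - X ^ n)) =
              ∏ n ∈ Finset.Icc 1 m, rpowS (qf z n) (1 - X ^ n) := by
            apply Finset.prod_congr rfl
            intro n hn
            rw [ih n (by simp at hn; omega)]
          rw [h2] at h1
          rw [qf_succ]
          linarith
end

section
/- A formal power series z ∈ 1 + t·ℚ[[t]] has all integer coefficients if and only if in its unique factorization z = ∏_{n≥1} (1 - t^n)^{q_n} all exponents q_n are integers. -/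
open PowerSeries Finset

namespace StmtAux

local notation "D" => PowerSeries.derivative (R := ℚ)
local notation "cf" => PowerSeries.coeff (R := ℚ)

lemma coeff_pow_eq_zero {x : PowerSeries ℚ} (hx : PowerSeries.constantCoeff x = 0)
    {n k : ℕ} (h : n < k) : cf n (x ^ k) = 0 := by
  have hdvd : (X : PowerSeries ℚ) ^ k ∣ x ^ k :=
    pow_dvd_pow_of_dvd (PowerSeries.X_dvd_iff.mpr hx) k
  exact (PowerSeries.X_pow_dvd_iff.mp hdvd) n h

lemma coeff_pow_mul_eq_zero {x g : PowerSeries ℚ} (hx : PowerSeries.constantCoeff x = 0)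
    {n k : ℕ} (h : n < k) : cf n (x ^ k * g) = 0 := by
  have hdvd : (X : PowerSeries ℚ) ^ k ∣ x ^ k * g :=
    Dvd.dvd.mul_right (pow_dvd_pow_of_dvd (PowerSeries.X_dvd_iff.mpr hx) k) g
  exact (PowerSeries.X_pow_dvd_iff.mp hdvd) n h

lemma expS_eq (x : PowerSeries ℚ) :
    expS x = PowerSeries.mk fun m =>
      ∑ k ∈ Finset.range (m + 1), ((Nat.factorial k : ℚ))⁻¹ * cf m (x ^ k) := by
  unfold expS
  refine congrArg _ (funext fun m => ?_)
  exact Finset.sum_congr rfl fun k _ => by rw [div_eq_mul_inv, mul_comm]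

lemma constantCoeff_logS (w : PowerSeries ℚ) :
    PowerSeries.constantCoeff (logS w) = 0 := by
  rw [← PowerSeries.coeff_zero_eq_constantCoeff_apply]
  unfold logS
  rw [PowerSeries.coeff_mk]
  simp

lemma constantCoeff_expS {x : PowerSeries ℚ} (hx : PowerSeries.constantCoeff x = 0) :
    PowerSeries.constantCoeff (expS x) = 1 := by
  rw [← PowerSeries.coeff_zero_eq_constantCoeff_apply]
  unfold expS
  rw [PowerSeries.coeff_mk]
  simp

lemma expS_zero : expS 0 = 1 := by
  ext n
  unfold expS
  rw [PowerSeries.coeff_mk]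
  cases n with
  | zero => simp
  | succ m =>
    rw [Finset.sum_range_succ']
    simp [zero_pow, PowerSeries.coeff_one]

/-- Key helper: multiplying a "truncated series of series" by `g`. -/
lemma coeff_mul_mk (g : PowerSeries ℚ) (c : ℕ → ℚ) (v : ℕ → PowerSeries ℚ)
    (hv : ∀ j k : ℕ, j < k → cf j (v k) = 0) (n : ℕ) :
    cf n (g * PowerSeries.mk fun m => ∑ k ∈ Finset.range (m + 1), c k * cf m (v k)) =
      ∑ k ∈ Finset.range (n + 1), c k * cf n (g * v k) := by
  rw [PowerSeries.coeff_mul]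
  have h1 : ∀ p ∈ Finset.HasAntidiagonal.antidiagonal n,
      cf p.1 g * cf p.2 (PowerSeries.mk fun m =>
        ∑ k ∈ Finset.range (m + 1), c k * cf m (v k)) =
      ∑ k ∈ Finset.range (n + 1), c k * (cf p.1 g * cf p.2 (v k)) := by
    intro p hp
    rw [PowerSeries.coeff_mk]
    have hp2 : p.2 ≤ n := by
      have := Finset.HasAntidiagonal.mem_antidiagonal.mp hp; omega
    have hext : ∑ k ∈ Finset.range (p.2 + 1), c k * cf p.2 (v k) =
        ∑ k ∈ Finset.range (n + 1), c k * cf p.2 (v k) := by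
      apply Finset.sum_subset
      · intro k hk
        rw [Finset.mem_range] at *
        omega
      · intro k hk hk'
        rw [Finset.mem_range] at *
        have : p.2 < k := by omega
        rw [hv _ _ this, mul_zero]
    rw [hext, Finset.mul_sum]
    exact Finset.sum_congr rfl fun k _ => by ring
  rw [Finset.sum_congr rfl h1, Finset.sum_comm]
  apply Finset.sum_congr rfl
  intro k _
  rw [PowerSeries.coeff_mul, Finset.mul_sum]

lemma coeff_mul_expS (g : PowerSeries ℚ) {x : PowerSeries ℚ}
    (hx : PowerSeries.constantCoeff x = 0) (n : ℕ) :
    cf n (g * expS x) =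
      ∑ k ∈ Finset.range (n + 1), ((Nat.factorial k : ℚ))⁻¹ * cf n (g * x ^ k) := by
  rw [expS_eq]
  exact coeff_mul_mk g _ _ (fun j k h => coeff_pow_eq_zero hx h) n

lemma triangle_sum (n : ℕ) (H : ℕ → ℕ → ℚ) (h0 : ∀ i j, n < i + j → H i j = 0) :
    ∑ k ∈ Finset.range (n + 1), ∑ i ∈ Finset.range (k + 1), H i (k - i) =
      ∑ i ∈ Finset.range (n + 1), ∑ j ∈ Finset.range (n + 1), H i j := by
  rw [← Finset.sum_product']
  rw [← Finset.sum_filter_add_sum_filter_not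
    ((Finset.range (n + 1)) ×ˢ (Finset.range (n + 1))) (fun p => p.1 + p.2 ≤ n)]
  have hzero : ∑ p ∈ ((Finset.range (n + 1)) ×ˢ (Finset.range (n + 1))).filter
      (fun p => ¬ p.1 + p.2 ≤ n), H p.1 p.2 = 0 := by
    apply Finset.sum_eq_zero
    intro p hp
    exact h0 p.1 p.2 (by have := (Finset.mem_filter.mp hp).2; omega)
  rw [hzero, add_zero, Finset.sum_sigma']
  refine Finset.sum_nbij' (fun p => (p.2, p.1 - p.2)) (fun p => ⟨p.1 + p.2, p.1⟩)
    ?_ ?_ ?_ ?_ ?_ <;> intro a ha <;>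
    simp only [Finset.mem_sigma, Finset.mem_filter, Finset.mem_product,
      Finset.mem_range] at ha ⊢
  · omega
  · omega
  · have h2 : a.snd + (a.fst - a.snd) = a.fst := by omega
    rw [h2]
  · have h2 : a.1 + a.2 - a.1 = a.2 := by omega
    rw [h2]

lemma coeff_pow_mul_pow_eq_zero {x y : PowerSeries ℚ}
    (hx : PowerSeries.constantCoeff x = 0) (hy : PowerSeries.constantCoeff y = 0)
    {n i j : ℕ} (h : n < i + j) : cf n (x ^ i * y ^ j) = 0 := by
  have hdvd : (X : PowerSeries ℚ) ^ (i + j) ∣ x ^ i * y ^ j := by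
    rw [pow_add]
    exact mul_dvd_mul (pow_dvd_pow_of_dvd (PowerSeries.X_dvd_iff.mpr hx) i)
      (pow_dvd_pow_of_dvd (PowerSeries.X_dvd_iff.mpr hy) j)
  exact (PowerSeries.X_pow_dvd_iff.mp hdvd) n h

lemma expS_add {x y : PowerSeries ℚ} (hx : PowerSeries.constantCoeff x = 0)
    (hy : PowerSeries.constantCoeff y = 0) :
    expS (x + y) = expS x * expS y := by
  ext n
  have hR : cf n (expS x * expS y) = ∑ k ∈ Finset.range (n + 1), ∑ i ∈ Finset.range (n + 1),
      ((Nat.factorial i : ℚ))⁻¹ * ((Nat.factorial k : ℚ))⁻¹ * cf n (x ^ i * y ^ k) := by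
    rw [coeff_mul_expS (expS x) hy n]
    refine Finset.sum_congr rfl fun k _ => ?_
    rw [mul_comm (expS x) (y ^ k), coeff_mul_expS (y ^ k) hx n, Finset.mul_sum]
    refine Finset.sum_congr rfl fun i _ => ?_
    rw [mul_comm (y ^ k) (x ^ i)]
    ring
  have hL : cf n (expS (x + y)) = ∑ k ∈ Finset.range (n + 1), ∑ i ∈ Finset.range (k + 1),
      ((Nat.factorial i : ℚ))⁻¹ * ((Nat.factorial (k - i) : ℚ))⁻¹ * cf n (x ^ i * y ^ (k - i)) := by
    conv_lhs => rw [expS, PowerSeries.coeff_mk]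
    refine Finset.sum_congr rfl fun k _ => ?_
    rw [add_pow, map_sum, Finset.sum_div]
    refine Finset.sum_congr rfl fun i hi => ?_
    have hik : i ≤ k := by
      have := Finset.mem_range.mp hi; omega
    have hcast : ((k.choose i : ℕ) : PowerSeries ℚ) = PowerSeries.C ((k.choose i : ℕ) : ℚ) := by
      rw [map_natCast]
    rw [hcast, PowerSeries.coeff_mul_C]
    have hfact : ((k.choose i : ℕ) : ℚ) * (Nat.factorial i : ℚ) * (Nat.factorial (k - i) : ℚ) =
        (Nat.factorial k : ℚ) := by
      rw [← Nat.cast_mul, ← Nat.cast_mul, Nat.choose_mul_factorial_mul_factorial hik]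
    have h1 : ((Nat.factorial i : ℚ)) ≠ 0 := Nat.cast_ne_zero.mpr (Nat.factorial_ne_zero i)
    have h2 : ((Nat.factorial (k - i) : ℚ)) ≠ 0 := Nat.cast_ne_zero.mpr (Nat.factorial_ne_zero _)
    have h3 : ((Nat.factorial k : ℚ)) ≠ 0 := Nat.cast_ne_zero.mpr (Nat.factorial_ne_zero k)
    have h4 : ((k.choose i : ℕ) : ℚ) ≠ 0 :=
      Nat.cast_ne_zero.mpr (Nat.choose_pos hik).ne'
    rw [← hfact]
    field_simp
  rw [hL, hR]
  have h0' : ∀ i j, n < i + j → ((Nat.factorial i : ℚ))⁻¹ * ((Nat.factorial j : ℚ))⁻¹ *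
      cf n (x ^ i * y ^ j) = 0 :=
    fun i j h => by rw [coeff_pow_mul_pow_eq_zero hx hy h, mul_zero]
  rw [triangle_sum n (fun i j => ((Nat.factorial i : ℚ))⁻¹ * ((Nat.factorial j : ℚ))⁻¹ *
      cf n (x ^ i * y ^ j)) h0']
  exact Finset.sum_comm

lemma coeff_deriv_mul_pow (x : PowerSeries ℚ) (k n : ℕ) :
    ((k : ℚ) + 1) * cf n (x ^ k * D x) = cf (n + 1) (x ^ (k + 1)) * ((n : ℚ) + 1) := by
  have h1 : D (x ^ (k + 1)) = (k + 1) • (x ^ k • D x) := by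
    simpa using Derivation.leibniz_pow (D) x (n := k + 1)
  have h2 := PowerSeries.coeff_derivative (x ^ (k + 1)) n
  rw [h1, map_nsmul, smul_eq_mul, nsmul_eq_mul] at h2
  push_cast at h2
  push_cast
  linarith [h2]

lemma expS_deriv {x : PowerSeries ℚ} (hx : PowerSeries.constantCoeff x = 0) :
    D (expS x) = D x * expS x := by
  ext n
  rw [PowerSeries.coeff_derivative, coeff_mul_expS (D x) hx n]
  conv_lhs => rw [expS, PowerSeries.coeff_mk]
  rw [Finset.sum_range_succ', add_mul, Finset.sum_mul]
  have h0 : cf (n + 1) (x ^ 0) / (Nat.factorial 0 : ℚ) * ((n : ℕ) + 1 : ℚ) = 0 := by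
    rw [pow_zero, PowerSeries.coeff_one, if_neg (Nat.succ_ne_zero n)]
    norm_num
  rw [h0, add_zero]
  refine Finset.sum_congr rfl fun k _ => ?_
  have hk := coeff_deriv_mul_pow x k n
  have hkf : ((Nat.factorial k : ℚ)) ≠ 0 := Nat.cast_ne_zero.mpr (Nat.factorial_ne_zero k)
  have hk1 : ((k : ℚ) + 1) ≠ 0 := by positivity
  have hfac : ((Nat.factorial (k + 1) : ℚ)) = ((k : ℚ) + 1) * (Nat.factorial k : ℚ) := by
    rw [Nat.factorial_succ]
    push_cast
    ring
  rw [mul_comm (D x) (x ^ k), hfac]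
  field_simp
  linear_combination (-1 : ℚ) * hk

lemma logS_deriv {w : PowerSeries ℚ} (hw : PowerSeries.constantCoeff w = 1) :
    w * D (logS w) = D w := by
  set u : PowerSeries ℚ := w - 1 with hu
  have hu0 : PowerSeries.constantCoeff u = 0 := by
    rw [hu, map_sub, hw, map_one, sub_self]
  have hDu : D u = D w := by
    rw [hu, map_sub]
    simp
  have hM : D (logS w) = PowerSeries.mk fun m =>
      ∑ k ∈ Finset.range (m + 1), (-1 : ℚ) ^ k * cf m (u ^ k * D u) := by
    ext n
    rw [PowerSeries.coeff_derivative, PowerSeries.coeff_mk]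
    conv_lhs => rw [logS, PowerSeries.coeff_mk]
    rw [Finset.sum_range_succ', add_mul, Finset.sum_mul]
    have h0 : (-1 : ℚ) ^ (0 + 1) / ((0 : ℕ) : ℚ) * cf (n + 1) ((w - 1) ^ 0) * ((n : ℕ) + 1 : ℚ)
        = 0 := by
      norm_num
    rw [h0, add_zero]
    refine Finset.sum_congr rfl fun k _ => ?_
    have hk := coeff_deriv_mul_pow u k n
    have hk1 : ((k : ℚ) + 1) ≠ 0 := by positivity
    have hsign : (-1 : ℚ) ^ (k + 1 + 1) = (-1 : ℚ) ^ k := by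
      rw [pow_succ, pow_succ]
      ring
    rw [hsign, ← hu]
    push_cast
    field_simp
    linear_combination (-1 : ℚ) * hk
  rw [hM]
  have hsplit : w * (PowerSeries.mk fun m =>
      ∑ k ∈ Finset.range (m + 1), (-1 : ℚ) ^ k * cf m (u ^ k * D u)) =
    (PowerSeries.mk fun m =>
      ∑ k ∈ Finset.range (m + 1), (-1 : ℚ) ^ k * cf m (u ^ k * D u)) +
    u * (PowerSeries.mk fun m =>
      ∑ k ∈ Finset.range (m + 1), (-1 : ℚ) ^ k * cf m (u ^ k * D u)) := by
    rw [hu]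
    ring
  rw [hsplit]
  ext n
  rw [map_add, PowerSeries.coeff_mk,
    coeff_mul_mk u _ _ (fun j k hjk => coeff_pow_mul_eq_zero hu0 hjk) n]
  have e2 : ∑ k ∈ Finset.range (n + 1), (-1 : ℚ) ^ k * cf n (u * (u ^ k * D u)) =
      ∑ k ∈ Finset.range (n + 1), (-1 : ℚ) ^ k * cf n (u ^ (k + 1) * D u) := by
    refine Finset.sum_congr rfl fun k _ => ?_
    congr 2
    ring
  rw [e2]
  have e4 : ∑ k ∈ Finset.range (n + 2), (-1 : ℚ) ^ k * cf n (u ^ k * D u) =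
      ∑ k ∈ Finset.range (n + 1), (-1 : ℚ) ^ (k + 1) * cf n (u ^ (k + 1) * D u) +
        (-1 : ℚ) ^ 0 * cf n (u ^ 0 * D u) := Finset.sum_range_succ' _ _
  have e5 : ∑ k ∈ Finset.range (n + 2), (-1 : ℚ) ^ k * cf n (u ^ k * D u) =
      ∑ k ∈ Finset.range (n + 1), (-1 : ℚ) ^ k * cf n (u ^ k * D u) +
        (-1 : ℚ) ^ (n + 1) * cf n (u ^ (n + 1) * D u) := Finset.sum_range_succ _ _
  have e6 : cf n (u ^ (n + 1) * D u) = 0 := coeff_pow_mul_eq_zero hu0 (by omega)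
  have e7 : ∑ k ∈ Finset.range (n + 1), (-1 : ℚ) ^ (k + 1) * cf n (u ^ (k + 1) * D u) =
      - ∑ k ∈ Finset.range (n + 1), (-1 : ℚ) ^ k * cf n (u ^ (k + 1) * D u) := by
    rw [← Finset.sum_neg_distrib]
    refine Finset.sum_congr rfl fun k _ => ?_
    rw [pow_succ]
    ring
  have e8 : cf n (u ^ 0 * D u) = cf n (D w) := by
    rw [pow_zero, one_mul, hDu]
  rw [e6, mul_zero, add_zero] at e5
  rw [e7, e8] at e4
  linarith [e4, e5]

lemma eq_of_deriv {w g : PowerSeries ℚ} (hw0 : PowerSeries.constantCoeff w = 1)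
    (hg0 : PowerSeries.constantCoeff g = 1)
    (h : D g * w = D w * g) : g = w := by
  ext n
  induction n using Nat.strong_induction_on with
  | _ n ih =>
    match n with
    | 0 => rw [PowerSeries.coeff_zero_eq_constantCoeff_apply,
        PowerSeries.coeff_zero_eq_constantCoeff_apply, hg0, hw0]
    | m + 1 =>
      have hc : cf m (D g * w) = cf m (D w * g) := by rw [h]
      rw [PowerSeries.coeff_mul, PowerSeries.coeff_mul,
        Finset.Nat.sum_antidiagonal_eq_sum_range_succ_mk,
        Finset.Nat.sum_antidiagonal_eq_sum_range_succ_mk,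
        Finset.sum_range_succ, Finset.sum_range_succ] at hc
      have key : ∀ i ∈ Finset.range m,
          cf (i, m - i).1 (D g) * cf (i, m - i).2 w =
            cf (i, m - i).1 (D w) * cf (i, m - i).2 g := by
        intro i hi
        have hi' : i < m := Finset.mem_range.mp hi
        simp only [PowerSeries.coeff_derivative]
        rw [ih (i + 1) (by omega), ih (m - i) (by omega)]
      rw [Finset.sum_congr rfl key] at hc
      have hc2 : cf (m, m - m).1 (D g) * cf (m, m - m).2 w =
          cf (m, m - m).1 (D w) * cf (m, m - m).2 g := by
        exact add_left_cancel hc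
      simp only [Nat.sub_self, PowerSeries.coeff_derivative,
        PowerSeries.coeff_zero_eq_constantCoeff_apply, hw0, hg0, mul_one] at hc2
      have hne : ((m : ℚ) + 1) ≠ 0 := by positivity
      exact mul_right_cancel₀ hne hc2

lemma expS_logS {w : PowerSeries ℚ} (hw : PowerSeries.constantCoeff w = 1) :
    expS (logS w) = w := by
  have hl : PowerSeries.constantCoeff (logS w) = 0 := constantCoeff_logS w
  apply eq_of_deriv hw (constantCoeff_expS hl)
  rw [expS_deriv hl]
  calc D (logS w) * expS (logS w) * w = (w * D (logS w)) * expS (logS w) := by ring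
  _ = D w * expS (logS w) := by rw [logS_deriv hw]

lemma rpowS_add {w : PowerSeries ℚ} (hw : PowerSeries.constantCoeff w = 1) (a b : ℚ) :
    rpowS (a + b) w = rpowS a w * rpowS b w := by
  unfold rpowS
  rw [add_smul]
  have hc : ∀ c : ℚ, PowerSeries.constantCoeff (c • logS w) = 0 := by
    intro c
    rw [← PowerSeries.coeff_zero_eq_constantCoeff_apply, map_smul,
      PowerSeries.coeff_zero_eq_constantCoeff_apply, constantCoeff_logS, smul_zero]
  exact expS_add (hc a) (hc b)

lemma rpowS_zero (w : PowerSeries ℚ) : rpowS 0 w = 1 := by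
  unfold rpowS
  rw [zero_smul, expS_zero]

lemma rpowS_one {w : PowerSeries ℚ} (hw : PowerSeries.constantCoeff w = 1) :
    rpowS 1 w = w := by
  unfold rpowS
  rw [one_smul]
  exact expS_logS hw

/-- integrality predicate -/
def IsIntS (f : PowerSeries ℚ) : Prop := ∀ m : ℕ, cf m f ∈ (⊥ : Subring ℚ)

lemma IsIntS_one : IsIntS 1 := by
  intro m
  rw [PowerSeries.coeff_one]
  split_ifs
  · exact one_mem _
  · exact zero_mem _

lemma IsIntS_mul {f g : PowerSeries ℚ} (hf : IsIntS f) (hg : IsIntS g) : IsIntS (f * g) := by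
  intro m
  rw [PowerSeries.coeff_mul]
  exact Subring.sum_mem _ fun p _ => mul_mem (hf p.1) (hg p.2)

lemma IsIntS_inv {f g : PowerSeries ℚ} (hf0 : PowerSeries.constantCoeff f = 1)
    (hf : IsIntS f) (hfg : g * f = 1) : IsIntS g := by
  intro m
  induction m using Nat.strong_induction_on with
  | _ m ih =>
    have hm : cf m (g * f) = cf m 1 := by rw [hfg]
    rw [PowerSeries.coeff_mul, Finset.Nat.sum_antidiagonal_eq_sum_range_succ_mk,
      Finset.sum_range_succ] at hm
    simp only [Nat.sub_self] at hm
    have hf00 : cf 0 f = 1 := by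
      rw [PowerSeries.coeff_zero_eq_constantCoeff_apply, hf0]
    rw [hf00, mul_one] at hm
    have hgm : cf m g = cf m 1 - ∑ i ∈ Finset.range m, cf (i, m - i).1 g * cf (i, m - i).2 f := by
      linarith [hm]
    rw [hgm]
    apply sub_mem
    · rw [PowerSeries.coeff_one]
      split_ifs
      · exact one_mem _
      · exact zero_mem _
    · exact Subring.sum_mem _ fun i hi =>
        mul_mem (ih i (Finset.mem_range.mp hi)) (hf (m - i))

lemma IsIntS_one_sub_X_pow (n : ℕ) : IsIntS (1 - (X : PowerSeries ℚ) ^ n) := by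
  intro m
  rw [map_sub, PowerSeries.coeff_one, PowerSeries.coeff_X_pow]
  split_ifs <;>
    apply sub_mem <;> first | exact one_mem _ | exact zero_mem _

lemma constantCoeff_one_sub_X_pow {n : ℕ} (hn : 1 ≤ n) :
    PowerSeries.constantCoeff (1 - (X : PowerSeries ℚ) ^ n) = 1 := by
  rw [map_sub, map_one, map_pow, PowerSeries.constantCoeff_X, zero_pow (by omega), sub_zero]

lemma IsIntS_rpowS_int {n : ℕ} (hn : 1 ≤ n) (k : ℤ) :
    IsIntS (rpowS (k : ℚ) (1 - (X : PowerSeries ℚ) ^ n)) := by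
  set w := 1 - (X : PowerSeries ℚ) ^ n with hwdef
  have hw : PowerSeries.constantCoeff w = 1 := constantCoeff_one_sub_X_pow hn
  have hwint : IsIntS w := IsIntS_one_sub_X_pow n
  have hneg1 : IsIntS (rpowS (-1) w) := by
    apply IsIntS_inv hw hwint
    have : rpowS (-1) w * rpowS 1 w = rpowS (-1 + 1) w := (rpowS_add hw (-1) 1).symm
    rw [rpowS_one hw] at this
    rw [this]
    norm_num
    exact rpowS_zero w
  induction k using Int.induction_on with
  | zero => rw [Int.cast_zero, rpowS_zero]; exact IsIntS_one
  | succ i ih =>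
    have : rpowS ((i + 1 : ℤ) : ℚ) w = rpowS (i : ℚ) w * rpowS 1 w := by
      rw [← rpowS_add hw]; norm_num
    rw [this, rpowS_one hw]
    exact IsIntS_mul ih hwint
  | pred i ih =>
    have : rpowS ((-i - 1 : ℤ) : ℚ) w = rpowS ((-i : ℤ) : ℚ) w * rpowS (-1) w := by
      rw [← rpowS_add hw]; push_cast; ring_nf
    rw [this]
    exact IsIntS_mul ih hneg1

lemma coeff_neg_X_pow_pow (n k j : ℕ) :
    cf j ((1 - (X : PowerSeries ℚ) ^ n - 1) ^ k) =
      (-1 : ℚ) ^ k * (if j = n * k then 1 else 0) := by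
  have h1 : (1 - (X : PowerSeries ℚ) ^ n - 1) = -(X ^ n) := by ring
  have h2 : (-((X : PowerSeries ℚ) ^ n)) ^ k =
      PowerSeries.C ((-1 : ℚ) ^ k) * X ^ (n * k) := by
    rw [neg_pow, ← pow_mul, map_pow, map_neg, map_one]
  rw [h1, h2, PowerSeries.coeff_C_mul, PowerSeries.coeff_X_pow]

lemma coeff_logS_one_sub_X_pow_lt {n j : ℕ} (hn : 1 ≤ n) (hj1 : 1 ≤ j) (hjn : j < n) :
    cf j (logS (1 - (X : PowerSeries ℚ) ^ n)) = 0 := by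
  unfold logS
  rw [PowerSeries.coeff_mk]
  apply Finset.sum_eq_zero
  intro k _
  rw [coeff_neg_X_pow_pow]
  have : j ≠ n * k := by
    intro h
    rcases Nat.eq_zero_or_pos k with rfl | hk1
    · omega
    · have : n * 1 ≤ n * k := Nat.mul_le_mul_left n hk1
      omega
  rw [if_neg this]
  ring

lemma coeff_logS_one_sub_X_pow_self {n : ℕ} (hn : 1 ≤ n) :
    cf n (logS (1 - (X : PowerSeries ℚ) ^ n)) = -1 := by
  unfold logS
  rw [PowerSeries.coeff_mk]
  rw [Finset.sum_eq_single 1]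
  · rw [coeff_neg_X_pow_pow, if_pos (by omega)]
    norm_num
  · intro k _ hk1
    rw [coeff_neg_X_pow_pow]
    rcases Nat.eq_zero_or_pos k with rfl | hk2
    · norm_num
    · have hk2' : 2 ≤ k := by omega
      have : n ≠ n * k := by
        have : n * 2 ≤ n * k := Nat.mul_le_mul_left n hk2'
        omega
      rw [if_neg this]
      ring
  · intro h
    exact absurd (Finset.mem_range.mpr (by omega)) h

lemma coeff_smul_logS (c : ℚ) (w : PowerSeries ℚ) (j : ℕ) :
    cf j (c • logS w) = c * cf j (logS w) := by
  rw [map_smul, smul_eq_mul]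

lemma X_pow_dvd_smul_logS {n : ℕ} (hn : 1 ≤ n) (c : ℚ) :
    (X : PowerSeries ℚ) ^ n ∣ c • logS (1 - (X : PowerSeries ℚ) ^ n) := by
  rw [PowerSeries.X_pow_dvd_iff]
  intro m hm
  rw [coeff_smul_logS]
  rcases Nat.eq_zero_or_pos m with rfl | hm1
  · rw [PowerSeries.coeff_zero_eq_constantCoeff_apply, constantCoeff_logS, mul_zero]
  · rw [coeff_logS_one_sub_X_pow_lt hn hm1 hm, mul_zero]

lemma coeff_rpowS_pow_zero {n : ℕ} (hn : 1 ≤ n) (c : ℚ) {j k : ℕ} (hj : j < n * k) :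
    cf j ((c • logS (1 - (X : PowerSeries ℚ) ^ n)) ^ k) = 0 := by
  have hdvd : (X : PowerSeries ℚ) ^ (n * k) ∣
      (c • logS (1 - (X : PowerSeries ℚ) ^ n)) ^ k := by
    rw [pow_mul]
    exact pow_dvd_pow_of_dvd (X_pow_dvd_smul_logS hn c) k
  exact (PowerSeries.X_pow_dvd_iff.mp hdvd) j hj

lemma coeff_rpowS_lt {n j : ℕ} (hn : 1 ≤ n) (hj1 : 1 ≤ j) (hjn : j < n) (c : ℚ) :
    cf j (rpowS c (1 - (X : PowerSeries ℚ) ^ n)) = 0 := by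
  unfold rpowS expS
  rw [PowerSeries.coeff_mk]
  apply Finset.sum_eq_zero
  intro k _
  rcases Nat.eq_zero_or_pos k with rfl | hk1
  · rw [pow_zero, PowerSeries.coeff_one, if_neg (by omega)]
    norm_num
  · rw [coeff_rpowS_pow_zero hn c (by calc j < n := hjn
        _ = n * 1 := (mul_one n).symm
        _ ≤ n * k := Nat.mul_le_mul_left n hk1)]
    norm_num

lemma coeff_rpowS_self {n : ℕ} (hn : 1 ≤ n) (c : ℚ) :
    cf n (rpowS c (1 - (X : PowerSeries ℚ) ^ n)) = -c := by
  unfold rpowS expS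
  rw [PowerSeries.coeff_mk]
  rw [Finset.sum_eq_single 1]
  · rw [pow_one, coeff_smul_logS, coeff_logS_one_sub_X_pow_self hn]
    norm_num
  · intro k _ hk1
    rcases Nat.eq_zero_or_pos k with rfl | hk2
    · rw [pow_zero, PowerSeries.coeff_one, if_neg (by omega)]
      norm_num
    · have hk2' : 2 ≤ k := by omega
      rw [coeff_rpowS_pow_zero hn c (by
        have : n * 2 ≤ n * k := Nat.mul_le_mul_left n hk2'
        omega)]
      norm_num
  · intro h
    exact absurd (Finset.mem_range.mpr (by omega)) h

lemma constantCoeff_rpowS {n : ℕ} (hn : 1 ≤ n) (c : ℚ) :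
    PowerSeries.constantCoeff (rpowS c (1 - (X : PowerSeries ℚ) ^ n)) = 1 := by
  unfold rpowS
  apply constantCoeff_expS
  rw [← PowerSeries.coeff_zero_eq_constantCoeff_apply, map_smul,
    PowerSeries.coeff_zero_eq_constantCoeff_apply, constantCoeff_logS, smul_zero]

lemma coeff_mul_rpow (A : PowerSeries ℚ) (hA : PowerSeries.constantCoeff A = 1)
    (m : ℕ) (c : ℚ) :
    cf (m + 1) (A * rpowS c (1 - (X : PowerSeries ℚ) ^ (m + 1))) = cf (m + 1) A - c := by
  rw [PowerSeries.coeff_mul, Finset.Nat.sum_antidiagonal_eq_sum_range_succ_mk,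
    Finset.sum_range_succ, Finset.sum_range_succ']
  have h1 : ∀ i ∈ Finset.range m,
      cf ((i + 1, m + 1 - (i + 1)).1) A *
        cf ((i + 1, m + 1 - (i + 1)).2) (rpowS c (1 - (X : PowerSeries ℚ) ^ (m + 1))) = 0 := by
    intro i hi
    have hi' : i < m := Finset.mem_range.mp hi
    rw [coeff_rpowS_lt (by omega) (by omega) (by omega) c, mul_zero]
  rw [Finset.sum_eq_zero h1, zero_add]
  have h2 : m + 1 - 0 = m + 1 := rfl
  have h3 : m + 1 - (m + 1) = 0 := Nat.sub_self _
  simp only [h2, h3]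
  rw [coeff_rpowS_self (by omega) c,
    PowerSeries.coeff_zero_eq_constantCoeff_apply,
    PowerSeries.coeff_zero_eq_constantCoeff_apply, hA,
    constantCoeff_rpowS (by omega) c]
  ring

end StmtAux

/-- A series `z ∈ 1 + t·ℚ[[t]]` has all integer coefficients iff in its factorization
`z = ∏_{n ≥ 1} (1 - tⁿ)^{q n}` all exponents `q n` are integers. -/
theorem stmt_3 (z : PowerSeries ℚ) (hz : PowerSeries.constantCoeff z = 1)
    (q : ℕ → ℚ) (hq0 : q 0 = 0)
    (hq : ∀ m : ℕ, PowerSeries.coeff m z =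
      PowerSeries.coeff m
        (∏ n ∈ Finset.Icc 1 m, rpowS (q n) (1 - PowerSeries.X ^ n))) :
    (∀ n : ℕ, ∃ k : ℤ, PowerSeries.coeff n z = (k : ℚ)) ↔
      (∀ n : ℕ, 1 ≤ n → ∃ k : ℤ, q n = (k : ℚ)) := by
  classical
  have hmem : ∀ r : ℚ, (∃ k : ℤ, r = (k : ℚ)) ↔ r ∈ (⊥ : Subring ℚ) := by
    intro r
    rw [Subring.mem_bot]
    constructor
    · rintro ⟨k, rfl⟩; exact ⟨k, rfl⟩
    · rintro ⟨k, hk⟩; exact ⟨k, hk.symm⟩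
  set P : ℕ → PowerSeries ℚ :=
    (fun m => ∏ n ∈ Finset.Icc 1 m, rpowS (q n) (1 - PowerSeries.X ^ n)) with hPdef
  have hqP : ∀ m, PowerSeries.coeff m z = PowerSeries.coeff m (P m) := hq
  have hPsucc : ∀ m : ℕ, P (m + 1) = P m * rpowS (q (m + 1)) (1 - PowerSeries.X ^ (m + 1)) := by
    intro m
    simp only [hPdef]
    exact Finset.prod_Icc_succ_top (by omega) _
  have hconstP : ∀ m, PowerSeries.constantCoeff (P m) = 1 := by
    intro m
    simp only [hPdef]
    rw [map_prod]
    exact Finset.prod_eq_one fun n hn =>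
      StmtAux.constantCoeff_rpowS (Finset.mem_Icc.mp hn).1 _
  have hstep : ∀ m : ℕ, PowerSeries.coeff (m + 1) z =
      PowerSeries.coeff (m + 1) (P m) - q (m + 1) := by
    intro m
    rw [hqP (m + 1), hPsucc m]
    exact StmtAux.coeff_mul_rpow (P m) (hconstP m) m (q (m + 1))
  have hPint : ∀ m : ℕ, (∀ i, 1 ≤ i → i ≤ m → q i ∈ (⊥ : Subring ℚ)) →
      StmtAux.IsIntS (P m) := by
    intro m h
    simp only [hPdef]
    refine Finset.prod_induction _ StmtAux.IsIntS
      (fun a b ha hb => StmtAux.IsIntS_mul ha hb) StmtAux.IsIntS_one ?_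
    intro i hi
    obtain ⟨hi1, hi2⟩ := Finset.mem_Icc.mp hi
    obtain ⟨k, hk⟩ := Subring.mem_bot.mp (h i hi1 hi2)
    have := StmtAux.IsIntS_rpowS_int (n := i) hi1 k
    rw [hk] at this
    exact this
  constructor
  · intro hz' n hn
    rw [hmem]
    induction n using Nat.strong_induction_on with
    | _ n ih =>
      match n, hn with
      | m + 1, _ =>
        have hPm : StmtAux.IsIntS (P m) := by
          apply hPint
          intro i hi1 hi2
          exact ih i (by omega) hi1
        have hqm : q (m + 1) = PowerSeries.coeff (m + 1) (P m) -
            PowerSeries.coeff (m + 1) z := by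
          have := hstep m
          linarith
        rw [hqm]
        exact sub_mem (hPm (m + 1)) ((hmem _).mp (hz' (m + 1)))
  · intro hq' n
    rw [hmem]
    match n with
    | 0 =>
      rw [PowerSeries.coeff_zero_eq_constantCoeff_apply, hz]
      exact one_mem _
    | m + 1 =>
      rw [hqP (m + 1)]
      refine hPint (m + 1) (fun i hi1 _ => ?_) (m + 1)
      exact (hmem _).mp (hq' i hi1)
end
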